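/- Let θ be irrational with irrationality exponent w(θ) and let 0 < τ < 1/w(θ). Then for every real y, for all sufficiently large Q there exists an integer 1 ≤ n ≤ Q with ‖nθ − y‖ < Q^{−τ}; i.e., the uniform approximation set U_τ[θ] is all of T. -/

import Mathlib

open Filter

/-- distance from `x` to the nearest integer -/
noncomputable def nint (x : ℝ) : ℝ := ⨅ m : ℤ, |x - (m : ℝ)|

/-- denominators of the continued fraction convergents of `θ` (`qd θ 0 = 1`) -/
noncomputable def qd (θ : ℝ) (n : ℕ) : ℝ := (GenContFract.of θ).dens n

/-- the `(n+1)`-st partial quotient `a_{n+1}` of `θ` is `partQuot θ n` -/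
noncomputable def partQuot (θ : ℝ) (n : ℕ) : Option ℝ := (GenContFract.of θ).partDens.get? n

/-- irrationality exponent `w(θ) = sup{ s > 0 : liminf_j j^s ‖jθ‖ = 0 }`, as an extended real -/
noncomputable def irrExp (θ : ℝ) : EReal :=
  sSup {w : EReal | ∃ s : ℝ, w = (s : EReal) ∧ 0 < s ∧
    Filter.atTop.liminf (fun j : ℕ => (j : ℝ) ^ s * nint (j * θ)) = 0}

/-- `G_n = ⋃_{i=1}^n B(iθ, n^{-τ})` in the circle `T = ℝ/ℤ` -/
noncomputable def Gset (θ τ : ℝ) (n : ℕ) : Set (AddCircle (1 : ℝ)) :=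
  ⋃ i ∈ Finset.Icc 1 n, Metric.ball (((i : ℝ) * θ : ℝ) : AddCircle (1 : ℝ)) ((n : ℝ) ^ (-τ))

/-- `F_k = ⋂_{n=q_k+1}^{q_{k+1}} G_n` -/
noncomputable def Fset (θ τ : ℝ) (k : ℕ) : Set (AddCircle (1 : ℝ)) :=
  ⋂ n ∈ {n : ℕ | qd θ k < (n : ℝ) ∧ (n : ℝ) ≤ qd θ (k + 1)}, Gset θ τ n

/-- the Dirichlet uniform approximation set `U_τ[θ] ⊆ T` -/
noncomputable def Uset (θ τ : ℝ) : Set (AddCircle (1 : ℝ)) :=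
  {y | ∀ᶠ Q : ℕ in atTop, ∃ n : ℕ, 1 ≤ n ∧ n ≤ Q ∧
    dist (((n : ℝ) * θ : ℝ) : AddCircle (1 : ℝ)) y < (Q : ℝ) ^ (-τ)}

-- basic nint lemmas
lemma round_min (x : ℝ) (m : ℤ) : |x - round x| ≤ |x - (m : ℝ)| := by
  rcases eq_or_ne m (round x) with h | h
  · rw [h]
  · have h1 : (1 : ℝ) ≤ |(round x : ℝ) - (m : ℝ)| := by
      have : round x - m ≠ 0 := sub_ne_zero.mpr (Ne.symm h)
      have := Int.one_le_abs this
      calc (1:ℝ) = ((1:ℤ):ℝ) := by norm_num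
        _ ≤ ((|round x - m| : ℤ) : ℝ) := by exact_mod_cast this
        _ = |(round x : ℝ) - (m:ℝ)| := by push_cast; rw [abs_sub_comm]
    have h2 : |x - round x| ≤ 1/2 := abs_sub_round x
    have h3 : |(round x : ℝ) - m| ≤ |(round x:ℝ) - x| + |x - m| := abs_sub_le _ _ _
    rw [abs_sub_comm ((round x:ℝ)) x] at h3
    linarith

lemma nint_eq (x : ℝ) : nint x = |x - round x| := by
  refine le_antisymm ?_ ?_
  · exact ciInf_le ⟨0, fun y ⟨m, hm⟩ => hm ▸ abs_nonneg _⟩ (round x)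
  · exact le_ciInf (round_min x)

lemma nint_nonneg (x : ℝ) : 0 ≤ nint x := by rw [nint_eq]; exact abs_nonneg _

lemma nint_le (x : ℝ) (m : ℤ) : nint x ≤ |x - (m : ℝ)| := by
  rw [nint_eq]; exact round_min x m

lemma nint_pos {x : ℝ} (hx : Irrational x) : 0 < nint x := by
  rw [nint_eq]
  exact abs_pos.mpr (sub_ne_zero.mpr (hx.ne_int (round x)))

lemma norm_coe_eq (x : ℝ) : ‖((x : ℝ) : AddCircle (1:ℝ))‖ = nint x := by
  rw [nint_eq]; exact UnitAddCircle.norm_eq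

lemma norm_coe_le (x : ℝ) : ‖((x : ℝ) : AddCircle (1:ℝ))‖ ≤ |x| := by
  rw [norm_coe_eq]
  simpa using nint_le x 0

lemma coe_sub_circ (a b : ℝ) : (((a - b : ℝ)) : AddCircle (1:ℝ)) = (a : AddCircle (1:ℝ)) - (b : AddCircle (1:ℝ)) := rfl

lemma dist_circ_le_fract (u v d : ℝ) (h : Int.fract (u - v) ≤ d) :
    dist ((u : ℝ) : AddCircle (1:ℝ)) ((v : ℝ) : AddCircle (1:ℝ)) ≤ d := by
  have h0 : (0:ℝ) ≤ Int.fract (u - v) := Int.fract_nonneg _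
  have key : ((u - v : ℝ) : AddCircle (1:ℝ)) = ((Int.fract (u - v) : ℝ) : AddCircle (1:ℝ)) := by
    have hfl : ((((⌊u - v⌋ : ℤ) : ℝ)) : AddCircle (1:ℝ)) = 0 := by
      rw [AddCircle.coe_eq_zero_iff]
      exact ⟨⌊u - v⌋, by simp⟩
    have heq : (u - v) = Int.fract (u - v) + ((⌊u - v⌋ : ℤ) : ℝ) := by
      rw [Int.fract]; ring
    conv_lhs => rw [heq]
    rw [AddCircle.coe_add, hfl, add_zero]
  calc dist ((u : ℝ) : AddCircle (1:ℝ)) ((v : ℝ) : AddCircle (1:ℝ))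
      = ‖((u - v : ℝ) : AddCircle (1:ℝ))‖ := by rw [dist_eq_norm, coe_sub_circ]
    _ = ‖((Int.fract (u - v) : ℝ) : AddCircle (1:ℝ))‖ := by rw [key]
    _ ≤ |Int.fract (u - v)| := norm_coe_le _
    _ ≤ d := by rwa [abs_of_nonneg h0]

-- the key "descent" covering lemma
lemma descent (θ y : ℝ) (q qp : ℕ) (hq : 1 ≤ q) (hqp : 1 ≤ qp) (p pp : ℤ) (ε εp : ℝ)
    (hε : (q : ℝ) * θ - (p : ℝ) = ε) (hεp : (qp : ℝ) * θ - (pp : ℝ) = εp)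
    (h1 : 0 < ε) (h2 : εp < 0) (h3 : -ε ≤ εp) :
    ∃ n : ℕ, 1 ≤ n ∧ n ≤ q + qp ∧ Int.fract (y - (n : ℝ) * θ) ≤ ε := by
  by_contra hcon
  push_neg at hcon
  set f : ℕ → ℝ := fun n => Int.fract (y - (n : ℝ) * θ) with hf
  have hne : (Finset.Icc 1 (q + qp)).Nonempty := ⟨1, by simp; omega⟩
  obtain ⟨n₀, hn₀mem, hmin⟩ := Finset.exists_min_image (Finset.Icc 1 (q + qp)) f hne
  rw [Finset.mem_Icc] at hn₀mem
  have hd : ε < f n₀ := hcon n₀ hn₀mem.1 hn₀mem.2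
  have hd1 : f n₀ < 1 := Int.fract_lt_one _
  rcases le_or_gt n₀ qp with hcase | hcase
  · -- use n₀ + q
    have hmem : n₀ + q ∈ Finset.Icc 1 (q + qp) := by rw [Finset.mem_Icc]; omega
    have hval : f (n₀ + q) = f n₀ - ε := by
      have e1 : y - ((n₀ + q : ℕ) : ℝ) * θ = (f n₀ - ε) + ((⌊y - (n₀:ℝ)*θ⌋ - p : ℤ) : ℝ) := by
        simp only [hf]
        push_cast
        rw [Int.fract]
        linarith [hε]
      have : f (n₀ + q) = Int.fract ((f n₀ - ε) + ((⌊y - (n₀:ℝ)*θ⌋ - p : ℤ) : ℝ)) := by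
        simp only [hf]; rw [e1]
      rw [this, Int.fract_add_intCast, Int.fract_eq_self.mpr ⟨by linarith, by linarith⟩]
    have := hmin _ hmem
    rw [hval] at this
    linarith
  · -- use n₀ - qp
    have hmem : n₀ - qp ∈ Finset.Icc 1 (q + qp) := by rw [Finset.mem_Icc]; omega
    have hcast : ((n₀ - qp : ℕ) : ℝ) = (n₀ : ℝ) - (qp : ℝ) := by
      have : qp ≤ n₀ := le_of_lt hcase
      push_cast [this]; ring
    have hval : f (n₀ - qp) = f n₀ + εp := by
      have e1 : y - ((n₀ - qp : ℕ) : ℝ) * θ = (f n₀ + εp) + ((⌊y - (n₀:ℝ)*θ⌋ + pp : ℤ) : ℝ) := by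
        simp only [hf]
        rw [hcast]
        push_cast
        rw [Int.fract]
        linarith [hεp]
      have : f (n₀ - qp) = Int.fract ((f n₀ + εp) + ((⌊y - (n₀:ℝ)*θ⌋ + pp : ℤ) : ℝ)) := by
        simp only [hf]; rw [e1]
      rw [this, Int.fract_add_intCast, Int.fract_eq_self.mpr ⟨by linarith, by linarith⟩]
    have := hmin _ hmem
    rw [hval] at this
    linarith

/-- `m` is a best-approximation denominator ("record") -/
def IsRec (θ : ℝ) (m : ℕ) : Prop :=
  1 ≤ m ∧ ∀ n : ℕ, 1 ≤ n → n < m → nint ((m : ℝ) * θ) < nint ((n : ℝ) * θ)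

lemma isRec_one (θ : ℝ) : IsRec θ 1 := ⟨le_refl 1, fun n h1 h2 => by omega⟩

lemma nint_mul_pos {θ : ℝ} (hθ : Irrational θ) {j : ℕ} (hj : 1 ≤ j) :
    0 < nint ((j : ℝ) * θ) :=
  nint_pos (hθ.natCast_mul (by omega))

/-- Dirichlet -/
lemma dirichlet (θ : ℝ) {M : ℕ} (hM : 1 ≤ M) :
    ∃ n : ℕ, 1 ≤ n ∧ n ≤ M ∧ nint ((n : ℝ) * θ) ≤ 1 / ((M : ℝ) + 1) := by
  obtain ⟨j, k, hk0, hkM, hjk⟩ := Real.exists_int_int_abs_mul_sub_le θ (n := M) (by omega)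
  refine ⟨k.toNat, by omega, by omega, ?_⟩
  have hcast : ((k.toNat : ℕ) : ℝ) = (k : ℝ) := by
    exact_mod_cast congrArg (Int.cast : ℤ → ℝ) (Int.toNat_of_nonneg hk0.le)
  calc nint ((k.toNat : ℝ) * θ) ≤ |(k.toNat : ℝ) * θ - (j : ℝ)| := nint_le _ j
    _ = |(k : ℝ) * θ - (j : ℝ)| := by rw [hcast]
    _ ≤ 1 / ((M : ℝ) + 1) := hjk

/-- existence of the next record, with its properties -/
lemma exists_next (θ : ℝ) (hθ : Irrational θ) (m : ℕ) (hm : IsRec θ m) :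
    ∃ m' : ℕ, IsRec θ m' ∧ m < m' ∧ nint ((m : ℝ) * θ) ≤ 1 / (m' : ℝ) := by
  classical
  set d := nint ((m : ℝ) * θ) with hd
  have hdpos : 0 < d := nint_mul_pos hθ hm.1
  have hex : ∃ n : ℕ, 1 ≤ n ∧ nint ((n : ℝ) * θ) < d := by
    obtain ⟨M, hM⟩ := exists_nat_gt (1 / d)
    have hM1 : 1 ≤ M := by
      by_contra hc
      push_neg at hc
      interval_cases M <;> simp_all <;> nlinarith [hdpos]
    obtain ⟨n, hn1, hnM, hn⟩ := dirichlet θ hM1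
    refine ⟨n, hn1, lt_of_le_of_lt hn ?_⟩
    rw [div_lt_iff₀ (by positivity)]
    have : 1 / d < (M : ℝ) + 1 := by linarith
    rw [div_lt_iff₀ hdpos] at this
    linarith
  obtain ⟨m', hspec, hmin⟩ : ∃ m' : ℕ, (1 ≤ m' ∧ nint ((m' : ℝ) * θ) < d) ∧
      ∀ n : ℕ, n < m' → ¬(1 ≤ n ∧ nint ((n : ℝ) * θ) < d) :=
    ⟨Nat.find hex, Nat.find_spec hex, fun n hn => Nat.find_min hex hn⟩
  have hge : ∀ n : ℕ, 1 ≤ n → n < m' → d ≤ nint ((n : ℝ) * θ) := by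
    intro n h1 h2
    by_contra hc
    push_neg at hc
    exact hmin n h2 ⟨h1, hc⟩
  have hmm' : m < m' := by
    rcases lt_trichotomy m m' with h | h | h
    · exact h
    · exfalso; rw [← h] at hspec; rw [hd] at hspec; exact lt_irrefl _ hspec.2
    · exfalso
      exact absurd hspec.2 (not_lt_of_ge (le_of_lt (hm.2 m' hspec.1 h)))
  have hrec : IsRec θ m' := by
    refine ⟨hspec.1, fun n h1 h2 => lt_of_lt_of_le hspec.2 (hge n h1 h2)⟩
  refine ⟨m', hrec, hmm', ?_⟩
  have hm1 := hm.1
  have hm'2 : 2 ≤ m' := by omega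
  obtain ⟨n, hn1, hnle, hn⟩ := dirichlet θ (M := m' - 1) (by omega)
  have hcast : ((m' - 1 : ℕ) : ℝ) + 1 = (m' : ℝ) := by
    have h1 : 1 ≤ m' := by omega
    rw [Nat.cast_sub h1]; push_cast; ring
  rw [hcast] at hn
  exact le_trans (hge n hn1 (by omega)) hn

/-- consecutive records: the bound `nint (a θ) ≤ 1/b` and opposite signs -/
lemma pair_props (θ : ℝ) (hθ : Irrational θ) (a b : ℕ) (ha : IsRec θ a) (hb : IsRec θ b)
    (hab : a < b) (hmin : ∀ n : ℕ, 1 ≤ n → n < b → nint ((a : ℝ) * θ) ≤ nint ((n : ℝ) * θ)) :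
    nint ((a : ℝ) * θ) ≤ 1 / (b : ℝ) ∧
      ((a : ℝ) * θ - round ((a : ℝ) * θ)) * ((b : ℝ) * θ - round ((b : ℝ) * θ)) < 0 := by
  have ha1 : 1 ≤ a := ha.1
  have hb2 : 2 ≤ b := by omega
  constructor
  · obtain ⟨n, hn1, hnle, hn⟩ := dirichlet θ (M := b - 1) (by omega)
    have hcast : ((b - 1 : ℕ) : ℝ) + 1 = (b : ℝ) := by
      have h1 : 1 ≤ b := by omega
      rw [Nat.cast_sub h1]; push_cast; ring
    rw [hcast] at hn
    exact le_trans (hmin n hn1 (by omega)) hn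
  · set ea := (a : ℝ) * θ - round ((a : ℝ) * θ) with hea
    set eb := (b : ℝ) * θ - round ((b : ℝ) * θ) with heb
    have hda : nint ((a:ℝ)*θ) = |ea| := nint_eq _
    have hdb : nint ((b:ℝ)*θ) = |eb| := nint_eq _
    have hdapos : 0 < |ea| := hda ▸ nint_mul_pos hθ ha1
    have hdbpos : 0 < |eb| := hdb ▸ nint_mul_pos hθ (by omega)
    have hlt : |eb| < |ea| := by
      rw [← hda, ← hdb]; exact hb.2 a ha1 hab
    by_contra hc
    push_neg at hc
    -- same sign: ea*eb ≥ 0, both nonzero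
    have heane : ea ≠ 0 := fun h => by rw [h] at hdapos; simp at hdapos
    have hebne : eb ≠ 0 := fun h => by rw [h] at hdbpos; simp at hdbpos
    have hsame : |eb - ea| = |ea| - |eb| ∨ |eb - ea| = |eb| - |ea| := by
      rcases lt_or_gt_of_ne heane with hn | hp
      · have hbn : eb < 0 := by
          rcases lt_or_gt_of_ne hebne with h | h
          · exact h
          · nlinarith
        rw [abs_of_neg hn, abs_of_neg hbn]
        rcases abs_cases (eb - ea) with ⟨h, _⟩ | ⟨h, _⟩ <;> [left; right] <;> linarith
      · have hbp : 0 < eb := by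
          rcases lt_or_gt_of_ne hebne with h | h
          · nlinarith
          · exact h
        rw [abs_of_pos hp, abs_of_pos hbp]
        rcases abs_cases (eb - ea) with ⟨h, _⟩ | ⟨h, _⟩ <;> [right; left] <;> linarith
    have hsmall : |eb - ea| < |ea| := by
      rcases hsame with h | h <;> rw [h] <;> linarith
    -- k = b - a
    have hk1 : 1 ≤ b - a := by omega
    have hkb : b - a < b := by omega
    have hkcast : ((b - a : ℕ) : ℝ) = (b : ℝ) - (a : ℝ) := by
      rw [Nat.cast_sub (le_of_lt hab)]
    have hnk : nint (((b - a : ℕ) : ℝ) * θ) ≤ |eb - ea| := by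
      calc nint (((b - a : ℕ) : ℝ) * θ) ≤ |((b - a : ℕ) : ℝ) * θ - ((round ((b:ℝ)*θ) - round ((a:ℝ)*θ) : ℤ) : ℝ)| :=
            nint_le _ _
        _ = |eb - ea| := by rw [hkcast]; push_cast; rw [hea, heb]; congr 1; ring
    have := hmin (b - a) hk1 hkb
    rw [hda] at this
    linarith

/-- previous record with minimality over the whole initial segment -/
lemma prev_min (θ : ℝ) (m : ℕ) (hm2 : 2 ≤ m) :
    ∃ a : ℕ, IsRec θ a ∧ 1 ≤ a ∧ a < m ∧
      ∀ n : ℕ, 1 ≤ n → n < m → nint ((a : ℝ) * θ) ≤ nint ((n : ℝ) * θ) := by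
  classical
  set a := Nat.findGreatest (IsRec θ) (m - 1) with had
  have ha1 : 1 ≤ a := Nat.le_findGreatest (by omega) (isRec_one θ)
  have halem : a ≤ m - 1 := Nat.findGreatest_le _
  have harec : IsRec θ a := Nat.findGreatest_spec (by omega : 1 ≤ m - 1) (isRec_one θ)
  refine ⟨a, harec, ha1, by omega, ?_⟩
  by_contra hcon
  push_neg at hcon
  obtain ⟨n, hn1, hnm, hn⟩ := hcon
  have hex : ∃ n : ℕ, 1 ≤ n ∧ n < m ∧ nint ((n : ℝ) * θ) < nint ((a : ℝ) * θ) := ⟨n, hn1, hnm, hn⟩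
  obtain ⟨n₀, hn₀, hmin⟩ : ∃ n₀ : ℕ, (1 ≤ n₀ ∧ n₀ < m ∧ nint ((n₀:ℝ)*θ) < nint ((a:ℝ)*θ)) ∧
      ∀ k : ℕ, k < n₀ → ¬(1 ≤ k ∧ k < m ∧ nint ((k:ℝ)*θ) < nint ((a:ℝ)*θ)) :=
    ⟨Nat.find hex, Nat.find_spec hex, fun k hk => Nat.find_min hex hk⟩
  have han₀ : a < n₀ := by
    rcases lt_trichotomy n₀ a with h | h | h
    · exact absurd hn₀.2.2 (not_lt_of_ge (le_of_lt (harec.2 n₀ hn₀.1 h)))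
    · exfalso; rw [h] at hn₀; exact lt_irrefl _ hn₀.2.2
    · exact h
  have hrecn₀ : IsRec θ n₀ := by
    refine ⟨hn₀.1, fun k h1 h2 => ?_⟩
    rcases lt_trichotomy k a with h | h | h
    · exact lt_trans hn₀.2.2 (harec.2 k h1 h)
    · rw [h]; exact hn₀.2.2
    · have hk' := hmin k h2
      push_neg at hk'
      exact lt_of_lt_of_le hn₀.2.2 (hk' h1 (by omega))
  exact Nat.findGreatest_is_greatest han₀ (by omega) hrecn₀

/-- core covering statement -/
lemma core (θ : ℝ) (hθ : Irrational θ) (s c τ : ℝ) (hs : 0 < s) (hc : 0 < c)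
    (hdio : ∀ j : ℕ, 1 ≤ j → c * (j : ℝ) ^ (-s) ≤ nint ((j : ℝ) * θ))
    (hτ : 0 < τ) (hτs : τ * s < 1) (y : AddCircle (1 : ℝ)) :
    ∀ᶠ Q : ℕ in atTop, ∃ n : ℕ, 1 ≤ n ∧ n ≤ Q ∧
      dist (((n : ℝ) * θ : ℝ) : AddCircle (1 : ℝ)) y < (Q : ℝ) ^ (-τ) := by
  classical
  obtain ⟨yl, rfl⟩ : ∃ x : ℝ, ((x : ℝ) : AddCircle (1:ℝ)) = y := Quotient.exists_rep y
  -- eventual conditions on Q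
  have hEv1 : ∀ᶠ Q : ℕ in atTop, (2:ℝ)^s < c * (Q:ℝ) / 2 := by
    obtain ⟨N, hN⟩ := exists_nat_gt ((2:ℝ)^s * 2 / c)
    filter_upwards [eventually_ge_atTop N] with Q hQ
    have h1 : (N:ℝ) ≤ Q := by exact_mod_cast hQ
    have h2 : (2:ℝ)^s * 2 / c < (Q:ℝ) := by linarith
    rw [div_lt_iff₀ hc] at h2
    linarith
  have hEv2 : ∀ᶠ Q : ℕ in atTop, (Q:ℝ)^(τ*s) < c * (Q:ℝ) / 2 := by
    have ht : Filter.Tendsto (fun Q : ℕ => (Q:ℝ)^(τ*s - 1)) atTop (nhds 0) := by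
      have h' := (tendsto_rpow_neg_atTop (show (0:ℝ) < 1 - τ*s by linarith)).comp
        (tendsto_natCast_atTop_atTop (R := ℝ))
      simpa [Function.comp_def, neg_sub] using h'
    have hev := ht.eventually (gt_mem_nhds (by positivity : (0:ℝ) < c/4))
    filter_upwards [hev, eventually_ge_atTop 1] with Q h1 h2
    have hQpos : (0:ℝ) < Q := by exact_mod_cast h2
    have hQ1 : (1:ℝ) ≤ Q := by exact_mod_cast h2
    have key : (Q:ℝ)^(τ*s) = (Q:ℝ)^(τ*s-1) * (Q:ℝ) := by
      have heq := Real.rpow_add hQpos (τ*s-1) 1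
      rw [Real.rpow_one] at heq
      have h3 : τ*s - 1 + 1 = τ*s := by ring
      rw [h3] at heq
      exact heq
    rw [key]
    calc (Q:ℝ)^(τ*s-1) * (Q:ℝ) < (c/4) * Q := by
          apply mul_lt_mul_of_pos_right h1 (by positivity)
      _ ≤ c * (Q:ℝ)/2 := by nlinarith
  filter_upwards [hEv1, hEv2, eventually_ge_atTop 2] with Q hQ2s hQmain hQ2
  -- set up records
  set k := Q / 2 with hk
  have hk1 : 1 ≤ k := by omega
  set m := Nat.findGreatest (IsRec θ) k with hmdef
  have hm1 : 1 ≤ m := Nat.le_findGreatest hk1 (isRec_one θ)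
  have hmk : m ≤ k := Nat.findGreatest_le _
  have hmrec : IsRec θ m := Nat.findGreatest_spec hk1 (isRec_one θ)
  obtain ⟨m₁, hm₁rec, hmm₁, hbound⟩ := exists_next θ hθ m hmrec
  have hkm₁ : k < m₁ := by
    by_contra hcon
    push_neg at hcon
    exact Nat.findGreatest_is_greatest hmm₁ hcon hm₁rec
  have hQpos : (0:ℝ) < Q := by
    have : (0:ℕ) < Q := by omega
    exact_mod_cast this
  -- nint(mθ) < 2/Q
  have h2Q : nint ((m:ℝ)*θ) < 2 / (Q:ℝ) := by
    have h2 : ((k:ℝ)+1) ≤ (m₁:ℝ) := by exact_mod_cast (by omega : k+1 ≤ m₁)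
    have h3 : (Q:ℝ) < 2*((k:ℝ)+1) := by exact_mod_cast (by omega : Q < 2*(k+1))
    calc nint ((m:ℝ)*θ) ≤ 1/(m₁:ℝ) := hbound
      _ ≤ 1/((k:ℝ)+1) := by
          apply one_div_le_one_div_of_le (by positivity) h2
      _ < 2/(Q:ℝ) := by
          rw [div_lt_div_iff₀ (by positivity) hQpos]
          linarith
  have hmpos : (0:ℝ) < m := by exact_mod_cast hm1
  have hmspos : (0:ℝ) < (m:ℝ)^s := Real.rpow_pos_of_pos hmpos s
  -- m^s > cQ/2
  have hms : c * (Q:ℝ)/2 < ((m:ℝ))^s := by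
    have hd := hdio m hm1
    rw [Real.rpow_neg hmpos.le] at hd
    have h4 : c * ((m:ℝ)^s)⁻¹ < 2/(Q:ℝ) := lt_of_le_of_lt hd h2Q
    rw [mul_inv_lt_iff₀ hmspos] at h4
    rw [div_mul_eq_mul_div, lt_div_iff₀ hQpos] at h4
    linarith
  -- m ≥ 2 (in fact > 2)
  have hm2 : 2 ≤ m := by
    by_contra hcon
    push_neg at hcon
    have : (m:ℝ) ≤ 2 := by exact_mod_cast (by omega : m ≤ 2)
    have : (m:ℝ)^s ≤ (2:ℝ)^s := Real.rpow_le_rpow hmpos.le this hs.le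
    linarith
  -- Q^τ < m
  have hQτm : (Q:ℝ)^τ < (m:ℝ) := by
    by_contra hcon
    push_neg at hcon
    have h5 : (m:ℝ)^s ≤ ((Q:ℝ)^τ)^s :=
      Real.rpow_le_rpow hmpos.le hcon hs.le
    rw [← Real.rpow_mul hQpos.le] at h5
    linarith
  -- previous record
  obtain ⟨a, harec, ha1, ham, hminA⟩ := prev_min θ m hm2
  obtain ⟨hbnd, hsign⟩ := pair_props θ hθ a m harec hmrec ham hminA
  set ea := (a:ℝ)*θ - round ((a:ℝ)*θ) with hea
  set em := (m:ℝ)*θ - round ((m:ℝ)*θ) with hem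
  have heaabs : nint ((a:ℝ)*θ) = |ea| := nint_eq _
  have hemabs : nint ((m:ℝ)*θ) = |em| := nint_eq _
  have hlt : |em| < |ea| := by rw [← heaabs, ← hemabs]; exact hmrec.2 a ha1 ham
  have hQτpos : (0:ℝ) < (Q:ℝ)^τ := Real.rpow_pos_of_pos hQpos τ
  have hfinal : nint ((a:ℝ)*θ) < (Q:ℝ)^(-τ) := by
    rw [Real.rpow_neg hQpos.le]
    calc nint ((a:ℝ)*θ) ≤ 1/(m:ℝ) := hbnd
      _ < ((Q:ℝ)^τ)⁻¹ := by
          rw [one_div, inv_lt_inv₀ hmpos hQτpos]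
          exact hQτm
  -- now apply descent, by sign cases
  have hcover : ∃ n : ℕ, 1 ≤ n ∧ n ≤ a + m ∧
      dist (((n:ℝ)*θ : ℝ) : AddCircle (1:ℝ)) ((yl : ℝ) : AddCircle (1:ℝ)) ≤ nint ((a:ℝ)*θ) := by
    have heane : ea ≠ 0 := by
      intro h0
      have hp := nint_mul_pos hθ ha1
      rw [heaabs, h0, abs_zero] at hp
      exact lt_irrefl _ hp
    rcases lt_or_gt_of_ne heane with hneg | hpos
    · -- ea < 0, so em > 0 ; apply descent to (-θ, -yl)
      have hempos : 0 < em := by nlinarith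
      have habs : em < -ea := by
        rw [abs_of_neg hneg, abs_of_pos hempos] at hlt
        linarith
      obtain ⟨n, hn1, hnle, hfr⟩ := descent (-θ) (-yl) a m ha1 hm1
        (-round ((a:ℝ)*θ)) (-round ((m:ℝ)*θ)) (-ea) (-em)
        (by push_cast; rw [hea]; ring) (by push_cast; rw [hem]; ring)
        (by linarith) (by linarith) (by linarith)
      have hrw : -yl - (n:ℝ)*(-θ) = (n:ℝ)*θ - yl := by ring
      rw [hrw] at hfr
      refine ⟨n, hn1, hnle, ?_⟩
      apply dist_circ_le_fract
      rw [heaabs, abs_of_neg hneg]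
      exact hfr
    · -- ea > 0, em < 0
      have hemneg : em < 0 := by nlinarith
      have habs : -em < ea := by
        rw [abs_of_pos hpos, abs_of_neg hemneg] at hlt
        linarith
      obtain ⟨n, hn1, hnle, hfr⟩ := descent θ yl a m ha1 hm1
        (round ((a:ℝ)*θ)) (round ((m:ℝ)*θ)) ea em hea.symm hem.symm
        hpos hemneg (by linarith)
      refine ⟨n, hn1, hnle, ?_⟩
      rw [dist_comm]
      apply dist_circ_le_fract
      rw [heaabs, abs_of_pos hpos]
      exact hfr
  obtain ⟨n, hn1, hnle, hdist⟩ := hcover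
  refine ⟨n, hn1, by omega, lt_of_le_of_lt hdist hfinal⟩

lemma liminf_pos_of_ne_zero (f : ℕ → ℝ) (h0 : ∀ j, 0 ≤ f j)
    (hne : atTop.liminf f ≠ 0) : ∃ c : ℝ, 0 < c ∧ ∀ᶠ j in atTop, c ≤ f j := by
  by_contra hcon
  push_neg at hcon
  apply hne
  rw [Filter.liminf_eq]
  have hsub : ∀ a ∈ {a : ℝ | ∀ᶠ n in atTop, a ≤ f n}, a ≤ 0 := by
    intro a ha
    by_contra hc2
    push_neg at hc2
    exact (hcon a hc2) (ha.mono fun n hn => not_lt.mpr hn)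
  apply le_antisymm
  · exact Real.sSup_le hsub le_rfl
  · exact le_csSup ⟨0, hsub⟩ (Eventually.of_forall h0)

lemma extract_dio (θ : ℝ) (hθ : Irrational θ) (s : ℝ) (hs : 0 < s)
    (hne : atTop.liminf (fun j : ℕ => (j : ℝ) ^ s * nint ((j : ℝ) * θ)) ≠ 0) :
    ∃ c : ℝ, 0 < c ∧ ∀ j : ℕ, 1 ≤ j → c * (j : ℝ) ^ (-s) ≤ nint ((j : ℝ) * θ) := by
  obtain ⟨c, hc, hev⟩ := liminf_pos_of_ne_zero _
    (fun j => mul_nonneg (Real.rpow_nonneg (Nat.cast_nonneg j) s) (nint_nonneg _)) hne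
  obtain ⟨N, hN⟩ := eventually_atTop.mp hev
  have hne' : (Finset.Icc 1 (N + 1)).Nonempty := Finset.nonempty_Icc.mpr (by omega)
  set c₂ := (Finset.Icc 1 (N + 1)).inf' hne' (fun j => nint ((j : ℝ) * θ)) with hc₂
  have hc₂pos : 0 < c₂ := by
    rw [hc₂, Finset.lt_inf'_iff]
    intro j hj
    rw [Finset.mem_Icc] at hj
    exact nint_mul_pos hθ hj.1
  refine ⟨min c c₂, lt_min hc hc₂pos, fun j hj => ?_⟩
  have hjpos : (0:ℝ) < j := by exact_mod_cast hj
  have hjs : (0:ℝ) < (j:ℝ)^s := Real.rpow_pos_of_pos hjpos s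
  rcases le_or_gt N j with hcase | hcase
  · have h1 := hN j hcase
    have h2 : c * (j:ℝ)^(-s) ≤ nint ((j:ℝ)*θ) := by
      rw [Real.rpow_neg hjpos.le, mul_inv_le_iff₀ hjs]
      linarith [h1, mul_comm ((j:ℝ)^s) (nint ((j:ℝ)*θ))]
    calc min c c₂ * (j:ℝ)^(-s) ≤ c * (j:ℝ)^(-s) :=
          mul_le_mul_of_nonneg_right (min_le_left _ _) (by positivity)
      _ ≤ nint ((j:ℝ)*θ) := h2
  · have hmem : j ∈ Finset.Icc 1 (N + 1) := Finset.mem_Icc.mpr ⟨hj, by omega⟩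
    have h1 : c₂ ≤ nint ((j:ℝ)*θ) := Finset.inf'_le _ hmem
    have h2 : (j:ℝ)^(-s) ≤ 1 :=
      Real.rpow_le_one_of_one_le_of_nonpos (by exact_mod_cast hj) (by linarith)
    calc min c c₂ * (j:ℝ)^(-s) ≤ min c c₂ * 1 :=
          mul_le_mul_of_nonneg_left h2 (le_of_lt (lt_min hc hc₂pos))
      _ = min c c₂ := mul_one _
      _ ≤ c₂ := min_le_right _ _
      _ ≤ nint ((j:ℝ)*θ) := h1

theorem stmt_13 (θ : ℝ) (hθ : Irrational θ) (τ : ℝ) (hτ : 0 < τ)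
    (h : (τ : EReal) * irrExp θ < 1) :
    Uset θ τ = Set.univ := by
  rw [Set.eq_univ_iff_forall]
  intro y
  have hmem : ∀ s : ℝ, 0 < s →
      atTop.liminf (fun j : ℕ => (j:ℝ)^s * nint ((j:ℝ) * θ)) = 0 → (s : EReal) ≤ irrExp θ :=
    fun s hs hl => le_sSup ⟨s, rfl, hs, hl⟩
  have hkey : ∃ s : ℝ, 0 < s ∧ τ * s < 1 ∧
      atTop.liminf (fun j : ℕ => (j:ℝ)^s * nint ((j:ℝ) * θ)) ≠ 0 := by
    rcases eq_top_or_lt_top (irrExp θ) with htop | htop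
    · exfalso
      rw [htop, EReal.coe_mul_top_of_pos hτ] at h
      exact absurd h (not_lt.mpr le_top)
    rcases eq_bot_or_bot_lt (irrExp θ) with hbot | hbot
    · refine ⟨1/(2*τ), by positivity, ?_, ?_⟩
      · rw [mul_one_div]
        rw [div_lt_one (by positivity)]
        linarith
      · intro hl
        have := hmem _ (by positivity) hl
        rw [hbot] at this
        exact EReal.coe_ne_bot _ (le_bot_iff.mp this)
    · set x := (irrExp θ).toReal with hx
      have hxe : ((x : ℝ) : EReal) = irrExp θ := EReal.coe_toReal htop.ne (ne_of_gt hbot)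
      have hτx : τ * x < 1 := by
        rw [← hxe, ← EReal.coe_mul] at h
        exact_mod_cast h
      have hx1τ : x < 1/τ := by
        rw [lt_div_iff₀ hτ, mul_comm]
        exact hτx
      have h1τpos : (0:ℝ) < 1/τ := by positivity
      have hmax : max x 0 < 1/τ := max_lt hx1τ h1τpos
      refine ⟨(max x 0 + 1/τ)/2, by positivity, ?_, ?_⟩
      · have hslt : (max x 0 + 1/τ)/2 < 1/τ := by linarith
        calc τ * ((max x 0 + 1/τ)/2) < τ * (1/τ) := by
              exact mul_lt_mul_of_pos_left hslt hτ
          _ = 1 := by field_simp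
      · intro hl
        have hle := hmem _ (by positivity) hl
        rw [← hxe, EReal.coe_le_coe_iff] at hle
        have : x < (max x 0 + 1/τ)/2 := by
          have := le_max_left x 0
          linarith
        linarith
  obtain ⟨s, hs, hτs, hne⟩ := hkey
  obtain ⟨c, hc, hdio⟩ := extract_dio θ hθ s hs hne
  exact core θ hθ s c τ hs hc hdio hτ hτs y
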